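/- arXiv:1611.06444 — 2 statements merged into one kernel-verified Lean document; each statement's English description precedes it below -/
import Mathlib

section
/- Let ε > 0, δ > 0, let a be a positive integer, R = ℤ/aℤ, V = Rⁿ, and let G be a finite abelian group with exponent dividing a. Let M be a random n×n matrix over R whose entries are independent ε-balanced random variables in R, and let F ∈ Hom(V, G) be a code of distance δn. Then there are constants K, c > 0 depending only on G, ε, δ and a such that for all n, |P(F∘M = 0) − |G|^{−n}| ≤ K e^{−cn} |G|^{−n}. -/
open MeasureTheory ProbabilityTheory Matrix

noncomputable section

/-- `V_{∖σ}`: the subgroup of `V = (ℤ/aℤ)ⁿ` generated by the standard basis vectors `v_i`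
for `i ∉ σ`, i.e. the vectors vanishing on `σ`. -/
def Vminus (a n : ℕ) (σ : Finset (Fin n)) : AddSubgroup (Fin n → ZMod a) where
  carrier := {v | ∀ i ∈ σ, v i = 0}
  zero_mem' := fun i _ => rfl
  add_mem' := by
    intro x y hx hy i hi
    simp only [Pi.add_apply, hx i hi, hy i hi, add_zero]
  neg_mem' := by
    intro x hx i hi
    simp only [Pi.neg_apply, hx i hi, neg_zero]

/-- `ℓ(D) = ∑ e_i` where `D = ∏ p_i^{e_i}`: the number of prime factors of `D` counted
with multiplicity. -/
def ell (D : ℕ) : ℕ := D.primeFactorsList.length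

/-- The set of positive integers `D` for which there is a `σ ⊆ [n]` with
`|σ| < ℓ(D)δn` and `D = [G : F(V_{∖σ})]`. -/
def depthSet {a n : ℕ} {G : Type*} [AddCommGroup G] (δ : ℝ)
    (F : (Fin n → ZMod a) →+ G) : Set ℕ :=
  {D | 0 < D ∧ ∃ σ : Finset (Fin n), (σ.card : ℝ) < (ell D : ℝ) * δ * n ∧
    D = ((Vminus a n σ).map F).index}

/-- `F` has depth `D` if `D` is the maximal element of `depthSet δ F`, or if `D = 1` and
`depthSet δ F` is empty. -/
def HasDepth {a n : ℕ} {G : Type*} [AddCommGroup G] (δ : ℝ)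
    (F : (Fin n → ZMod a) →+ G) (D : ℕ) : Prop :=
  (D ∈ depthSet δ F ∧ ∀ D' ∈ depthSet δ F, D' ≤ D) ∨ (D = 1 ∧ depthSet δ F = ∅)

/-- `F` is a code of distance `w`: removing fewer than `w` of the standard basis vectors
leaves a generating set of the image `G`, i.e. `F(V_{∖σ}) = G` for all `|σ| < w`. -/
def IsCode {a n : ℕ} {G : Type*} [AddCommGroup G] (w : ℝ)
    (F : (Fin n → ZMod a) →+ G) : Prop :=
  ∀ σ : Finset (Fin n), (σ.card : ℝ) < w → (Vminus a n σ).map F = ⊤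

/-- A random variable valued in `ℤ/aℤ` is `ε`-balanced if for every prime `p ∣ a` and every
residue `r` mod `p`, `P(y ≡ r (mod p)) ≤ 1 - ε`. -/
def IsEpsBalancedZMod {Ω : Type*} [MeasurableSpace Ω] (μ : Measure Ω) (ε : ℝ) {a : ℕ}
    (y : Ω → ZMod a) : Prop :=
  ∀ (p : ℕ) (_ : p.Prime) (hpa : p ∣ a) (r : ZMod p),
    μ {ω | ZMod.castHom hpa (ZMod p) (y ω) = r} ≤ ENNReal.ofReal (1 - ε)

/-- A random `n × n` matrix over `ℤ/aℤ` is `ε`-balanced if its entries are independent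
`ε`-balanced random variables. -/
def IsEpsBalancedMatrix {Ω : Type*} [MeasurableSpace Ω] (μ : Measure Ω) (ε : ℝ) {a n : ℕ}
    (M : Ω → Matrix (Fin n) (Fin n) (ZMod a)) : Prop :=
  IsProbabilityMeasure μ ∧
    (∀ i j, Measurable fun ω => M ω i j) ∧
    (∀ i j, IsEpsBalancedZMod μ ε fun ω => M ω i j) ∧
    iIndepFun
      (fun q : Fin n × Fin n => fun ω => M ω q.1 q.2) μ

namespace ProofAux

/-- The minimal value of `1 - re z` over nontrivial `a`-th roots of unity. -/
def gap (a : ℕ) : ℝ :=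
  if h : ((Polynomial.nthRootsFinset a (1 : ℂ)).erase 1).Nonempty then
    ((Polynomial.nthRootsFinset a (1 : ℂ)).erase 1).inf' h (fun z => 1 - z.re) else 1

lemma re_lt_one_of_root {a : ℕ} (ha : 0 < a) {z : ℂ} (hz : z ^ a = 1) (h1 : z ≠ 1) :
    z.re < 1 := by
  have hnorm : ‖z‖ = 1 := Complex.norm_eq_one_of_pow_eq_one hz ha.ne'
  have hsq : z.re ^ 2 + z.im ^ 2 = 1 := by
    have := Complex.sq_norm z
    rw [Complex.normSq_apply] at this
    nlinarith [this]
  rcases lt_or_ge z.re 1 with h | h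
  · exact h
  · exfalso
    have him : z.im = 0 := by nlinarith
    have hre : z.re = 1 := by nlinarith
    exact h1 (Complex.ext hre him)

lemma gap_pos {a : ℕ} (ha : 0 < a) : 0 < gap a := by
  unfold gap
  split_ifs with h
  · rw [Finset.lt_inf'_iff]
    intro z hz
    rw [Finset.mem_erase, Polynomial.mem_nthRootsFinset ha] at hz
    have := re_lt_one_of_root ha hz.2 hz.1
    linarith
  · norm_num

lemma re_le_of_root {a : ℕ} (ha : 0 < a) {z : ℂ} (hz : z ^ a = 1) (h1 : z ≠ 1) :
    z.re ≤ 1 - gap a := by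
  have hmem : z ∈ (Polynomial.nthRootsFinset a (1 : ℂ)).erase 1 :=
    Finset.mem_erase.2 ⟨h1, (Polynomial.mem_nthRootsFinset ha (1 : ℂ)).2 hz⟩
  have hne : ((Polynomial.nthRootsFinset a (1 : ℂ)).erase 1).Nonempty := ⟨z, hmem⟩
  have : gap a ≤ 1 - z.re := by
    unfold gap
    rw [dif_pos hne]
    exact Finset.inf'_le _ hmem
  linarith


lemma char_eq_pow {a : ℕ} [NeZero a] (χ : AddChar (ZMod a) ℂ) (t : ZMod a) :
    χ t = χ 1 ^ t.val := by
  have ht : t = (t.val : ℕ) • (1 : ZMod a) := by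
    simp [nsmul_eq_mul, ZMod.natCast_val, ZMod.cast_id]
  conv_lhs => rw [ht]
  rw [AddChar.map_nsmul_eq_pow]

lemma char_pow_a {a : ℕ} [NeZero a] (χ : AddChar (ZMod a) ℂ) (t : ZMod a) :
    (χ t) ^ a = 1 := by
  rw [← AddChar.map_nsmul_eq_pow]
  have : a • t = 0 := by
    simp [nsmul_eq_mul, ZMod.natCast_self]
  rw [this, AddChar.map_zero_eq_one]

/-- Core single-character bound for balanced distributions. -/
lemma norm_char_sum_le {a : ℕ} [NeZero a] (ha : 0 < a) {ε : ℝ} (hε : 0 < ε)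
    (q : ZMod a → ℝ) (hq0 : ∀ t, 0 ≤ q t) (hq1 : ∑ t, q t = 1)
    (hbal : ∀ (p : ℕ) (_ : p.Prime) (hpa : p ∣ a) (r : ZMod p),
      ∑ t ∈ Finset.univ.filter (fun t => ZMod.castHom hpa (ZMod p) t = r), q t ≤ 1 - ε)
    (χ : AddChar (ZMod a) ℂ) (hχ : χ ≠ 1) :
    ‖∑ t, (q t : ℂ) * χ t‖ ≤ Real.sqrt (1 - gap a * ε) := by
  classical
  set ζ : ℂ := χ 1 with hζdef
  have hζa : ζ ^ a = 1 := char_pow_a χ 1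
  have hζ1 : ζ ≠ 1 := by
    intro h
    apply hχ
    ext t
    rw [char_eq_pow, ← hζdef, h, one_pow, AddChar.one_apply]
  have hfin : IsOfFinOrder ζ := isOfFinOrder_iff_pow_eq_one.2 ⟨a, ha, hζa⟩
  set m := orderOf ζ with hm
  have hma : m ∣ a := orderOf_dvd_of_pow_eq_one hζa
  have hm1 : m ≠ 1 := fun h => hζ1 (orderOf_eq_one_iff.1 h)
  set p := m.minFac with hp
  have pp : p.Prime := Nat.minFac_prime hm1
  have hpm : p ∣ m := Nat.minFac_dvd m
  have hpa : p ∣ a := hpm.trans hma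
  -- if χ u = 1 then p divides u.val
  have hker : ∀ u : ZMod a, χ u = 1 → (ZMod.castHom hpa (ZMod p)) u = 0 := by
    intro u hu
    rw [char_eq_pow] at hu
    have hmdvd : m ∣ u.val := orderOf_dvd_of_pow_eq_one hu
    have hpdvd : p ∣ u.val := hpm.trans hmdvd
    have : ((u.val : ℕ) : ZMod p) = 0 := (ZMod.natCast_eq_zero_iff _ _).2 hpdvd
    rw [ZMod.castHom_apply, ← ZMod.natCast_val, this]
  -- re bound for separated pairs
  have key2 : ∀ s t : ZMod a,
      ZMod.castHom hpa (ZMod p) s ≠ ZMod.castHom hpa (ZMod p) t → (χ (s - t)).re ≤ 1 - gap a := by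
    intro s t hst
    apply re_le_of_root ha (char_pow_a χ _)
    intro h
    apply hst
    have := hker _ h
    rw [map_sub] at this
    exact sub_eq_zero.1 this
  have keyRe1 : ∀ u : ZMod a, (χ u).re ≤ 1 := by
    intro u
    calc (χ u).re ≤ ‖χ u‖ := Complex.re_le_norm _
    _ = 1 := by rw [AddChar.norm_apply]
  set S : ℂ := ∑ t, (q t : ℂ) * χ t with hS
  have hconj : (starRingEnd ℂ) S = ∑ t, (q t : ℂ) * χ (-t) := by
    rw [map_sum]
    refine Finset.sum_congr rfl fun t _ => ?_
    rw [_root_.map_mul, Complex.conj_ofReal]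
    congr 1
    rw [AddChar.map_neg_eq_inv, Complex.inv_eq_conj (AddChar.norm_apply _ _)]
  have hnormsq : ‖S‖ ^ 2 = ∑ s : ZMod a, ∑ t : ZMod a, q s * q t * (χ (s - t)).re := by
    have h1 : S * (starRingEnd ℂ) S = ∑ s : ZMod a, ∑ t : ZMod a,
        ((q s * q t : ℝ) : ℂ) * χ (s - t) := by
      rw [hconj, hS, Finset.sum_mul_sum]
      refine Finset.sum_congr rfl fun s _ => Finset.sum_congr rfl fun t _ => ?_
      rw [sub_eq_add_neg, AddChar.map_add_eq_mul]
      push_cast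
      ring
    have h2 : (S * (starRingEnd ℂ) S).re = ‖S‖ ^ 2 := by
      rw [Complex.mul_conj', ← Complex.ofReal_pow, Complex.ofReal_re]
    rw [← h2, h1, Complex.re_sum]
    refine Finset.sum_congr rfl fun s _ => ?_
    rw [Complex.re_sum]
    exact Finset.sum_congr rfl fun t _ => Complex.re_ofReal_mul _ _
  have inner_bound : ∀ s : ZMod a, ∑ t : ZMod a, q t * (χ (s - t)).re ≤ 1 - gap a * ε := by
    intro s
    set r : ZMod p := ZMod.castHom hpa (ZMod p) s with hr
    set A := ∑ t ∈ Finset.univ.filter (fun t => ZMod.castHom hpa (ZMod p) t = r), q t with hA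
    set B := ∑ t ∈ Finset.univ.filter (fun t => ¬ZMod.castHom hpa (ZMod p) t = r), q t with hB
    have hAB : A + B = 1 := by
      rw [hA, hB, Finset.sum_filter_add_sum_filter_not, hq1]
    have hAle : A ≤ 1 - ε := hbal p pp hpa r
    have h1 : ∑ t ∈ Finset.univ.filter (fun t => ZMod.castHom hpa (ZMod p) t = r),
        q t * (χ (s - t)).re ≤ A := by
      rw [hA]
      refine Finset.sum_le_sum fun t _ => ?_
      calc q t * (χ (s - t)).re ≤ q t * 1 :=
        mul_le_mul_of_nonneg_left (keyRe1 _) (hq0 t)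
      _ = q t := mul_one _
    have h2 : ∑ t ∈ Finset.univ.filter (fun t => ¬ZMod.castHom hpa (ZMod p) t = r),
        q t * (χ (s - t)).re ≤ (1 - gap a) * B := by
      rw [hB, Finset.mul_sum]
      refine Finset.sum_le_sum fun t ht => ?_
      have hne : ZMod.castHom hpa (ZMod p) s ≠ ZMod.castHom hpa (ZMod p) t := by
        have h3 := (Finset.mem_filter.1 ht).2
        exact fun hcon => h3 (by rw [hr, ← hcon])
      calc q t * (χ (s - t)).re ≤ q t * (1 - gap a) :=
        mul_le_mul_of_nonneg_left (key2 s t hne) (hq0 t)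
      _ = (1 - gap a) * q t := mul_comm _ _
    have hBge : ε ≤ B := by linarith
    have hgap := gap_pos ha
    have hsplit := Finset.sum_filter_add_sum_filter_not Finset.univ
      (fun t : ZMod a => ZMod.castHom hpa (ZMod p) t = r) (fun t => q t * (χ (s - t)).re)
    have hgapB : gap a * ε ≤ gap a * B := mul_le_mul_of_nonneg_left hBge hgap.le
    calc ∑ t : ZMod a, q t * (χ (s - t)).re
        = (∑ t ∈ Finset.univ.filter (fun t => ZMod.castHom hpa (ZMod p) t = r),
            q t * (χ (s - t)).re)
          + ∑ t ∈ Finset.univ.filter (fun t => ¬ZMod.castHom hpa (ZMod p) t = r),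
            q t * (χ (s - t)).re := hsplit.symm
      _ ≤ A + (1 - gap a) * B := add_le_add h1 h2
      _ = 1 - gap a * B := by nlinarith [hAB]
      _ ≤ 1 - gap a * ε := by linarith
  have hfinal2 : ‖S‖ ^ 2 ≤ 1 - gap a * ε := by
    rw [hnormsq]
    have hfact : ∀ s : ZMod a, ∑ t : ZMod a, q s * q t * (χ (s - t)).re
        = q s * ∑ t : ZMod a, q t * (χ (s - t)).re := by
      intro s
      rw [Finset.mul_sum]
      exact Finset.sum_congr rfl fun t _ => by ring
    calc ∑ s : ZMod a, ∑ t : ZMod a, q s * q t * (χ (s - t)).re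
        ≤ ∑ s : ZMod a, q s * (1 - gap a * ε) := by
          refine Finset.sum_le_sum fun s _ => ?_
          rw [hfact s]
          exact mul_le_mul_of_nonneg_left (inner_bound s) (hq0 s)
      _ = 1 - gap a * ε := by rw [← Finset.sum_mul, hq1, one_mul]
  calc ‖S‖ = Real.sqrt (‖S‖ ^ 2) := (Real.sqrt_sq (norm_nonneg S)).symm
    _ ≤ Real.sqrt (1 - gap a * ε) := Real.sqrt_le_sqrt hfinal2


/-- `η`: the contraction factor. -/
def eta (a : ℕ) (ε : ℝ) : ℝ := max (Real.sqrt (1 - gap a * ε)) (1/2)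

lemma eta_pos {a : ℕ} {ε : ℝ} : 0 < eta a ε :=
  lt_of_lt_of_le (by norm_num) (le_max_right _ _)

lemma eta_lt_one {a : ℕ} (ha : 0 < a) {ε : ℝ} (hε : 0 < ε) : eta a ε < 1 := by
  have h1 : 1 - gap a * ε < 1 := by nlinarith [gap_pos ha]
  have : Real.sqrt (1 - gap a * ε) < 1 := (Real.sqrt_lt' one_pos).2 (by nlinarith)
  exact max_lt this (by norm_num)

/-- `λ = -log η > 0`. -/
def lam (a : ℕ) (ε : ℝ) : ℝ := -Real.log (eta a ε)

lemma lam_pos {a : ℕ} (ha : 0 < a) {ε : ℝ} (hε : 0 < ε) : 0 < lam a ε := by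
  have := Real.log_neg (eta_pos (a := a) (ε := ε)) (eta_lt_one ha hε)
  simp only [lam]
  linarith

lemma addChar_map_sum {A : Type*} [AddCommGroup A] {ι : Type*} (ψ : AddChar A ℂ)
    (s : Finset ι) (f : ι → A) : ψ (∑ i ∈ s, f i) = ∏ i ∈ s, ψ (f i) := by
  classical
  induction s using Finset.induction_on with
  | empty => simp [AddChar.map_zero_eq_one]
  | insert _ _ hnotmem ih =>
      rw [Finset.sum_insert hnotmem, Finset.prod_insert hnotmem, AddChar.map_add_eq_mul, ih]

lemma col_bound {a : ℕ} [NeZero a] (ha : 0 < a) {n : ℕ}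
    {G : Type*} [AddCommGroup G] [Fintype G] [DecidableEq G]
    {ε δ : ℝ} (hε : 0 < ε) (hδ : 0 < δ)
    (q : Fin n → ZMod a → ℝ) (hq0 : ∀ i t, 0 ≤ q i t) (hq1 : ∀ i, ∑ t, q i t = 1)
    (hbal : ∀ i (p : ℕ) (_ : p.Prime) (hpa : p ∣ a) (r : ZMod p),
      ∑ t ∈ Finset.univ.filter (fun t => ZMod.castHom hpa (ZMod p) t = r), q i t ≤ 1 - ε)
    (F : (Fin n → ZMod a) →+ G) (hF : IsCode (δ * n) F) :
    |(∑ x ∈ Finset.univ.filter (fun x : (Fin n → ZMod a) => F x = 0), ∏ i, q i (x i))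
      - ((Fintype.card G : ℝ))⁻¹| ≤ Real.exp (-(lam a ε * δ) * n) := by
  classical
  set N := Fintype.card G with hN
  have hNpos : 0 < N := Fintype.card_pos
  set T := Finset.univ.filter (fun x : (Fin n → ZMod a) => F x = 0) with hT
  set P : ℝ := ∑ x ∈ T, ∏ i, q i (x i) with hP
  set h : Fin n → (ZMod a →+ G) :=
    fun i => F.comp (AddMonoidHom.single (fun _ => ZMod a) i) with hh
  have hFx : ∀ x : Fin n → ZMod a, F x = ∑ i, h i (x i) := by
    intro x
    conv_lhs => rw [← Finset.univ_sum_single x]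
    rw [map_sum]
    rfl
  have charSum : ∀ (ψ : AddChar G ℂ) (x : Fin n → ZMod a),
      ψ (F x) = ∏ i, ψ (h i (x i)) := by
    intro ψ x
    rw [hFx, addChar_map_sum]
  set S : AddChar G ℂ → Fin n → ℂ :=
    fun ψ i => ∑ t, (q i t : ℂ) * ψ (h i t) with hSdef
  -- the Fourier identity
  have hexp : ∀ ψ : AddChar G ℂ, ∏ i, S ψ i
      = ∑ g : Fin n → ZMod a, (∏ i, (q i (g i) : ℂ)) * ψ (F g) := by
    intro ψ
    have hps := Finset.prod_univ_sum (fun _ : Fin n => (Finset.univ : Finset (ZMod a)))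
      (fun i t => (q i t : ℂ) * ψ (h i t))
    rw [hSdef]
    simp only [hps, Fintype.piFinset_univ]
    refine Finset.sum_congr rfl fun g _ => ?_
    rw [Finset.prod_mul_distrib, charSum]
  have hNP : (N : ℂ) * (P : ℂ) = ∑ ψ : AddChar G ℂ, ∏ i, S ψ i := by
    calc (N : ℂ) * (P : ℂ)
        = ∑ g ∈ T, (∏ i, (q i (g i) : ℂ)) * (N : ℂ) := by
          rw [hP]
          push_cast
          rw [Finset.mul_sum]
          exact Finset.sum_congr rfl fun g _ => by ring
      _ = ∑ g : Fin n → ZMod a,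
            (if F g = 0 then (∏ i, (q i (g i) : ℂ)) * (N : ℂ) else 0) := by
          rw [hT, Finset.sum_filter]
      _ = ∑ g : Fin n → ZMod a, (∏ i, (q i (g i) : ℂ)) * ∑ ψ : AddChar G ℂ, ψ (F g) := by
          refine Finset.sum_congr rfl fun g _ => ?_
          rw [AddChar.sum_apply_eq_ite, mul_ite, mul_zero]
      _ = ∑ ψ : AddChar G ℂ, ∏ i, S ψ i := by
          simp only [hexp, Finset.mul_sum]
          rw [Finset.sum_comm]
  -- remove the trivial character
  have hS1 : ∏ i, S 1 i = 1 := by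
    rw [hSdef]
    refine Finset.prod_eq_one fun i _ => ?_
    simp only [AddChar.one_apply, mul_one]
    rw [← Complex.ofReal_sum]
    rw [hq1 i]
    norm_num
  have hsplit : (N : ℂ) * (P : ℂ) - 1
      = ∑ ψ ∈ Finset.univ.erase (1 : AddChar G ℂ), ∏ i, S ψ i := by
    rw [hNP, ← Finset.add_sum_erase _ _ (Finset.mem_univ (1 : AddChar G ℂ)), hS1]
    ring
  -- bound each nontrivial character term
  have hbound : ∀ ψ ∈ Finset.univ.erase (1 : AddChar G ℂ),
      ‖∏ i, S ψ i‖ ≤ Real.exp (-(lam a ε * δ) * n) := by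
    intro ψ hψ
    have hψne : ψ ≠ 1 := (Finset.mem_erase.1 hψ).1
    set pr : Fin n → Prop := fun i => ψ.compAddMonoidHom (h i) ≠ 1 with hpr
    set τ : Finset (Fin n) := Finset.univ.filter pr with hτdef
    -- the code condition forces many nontrivial component characters
    have hτcard : (δ * n : ℝ) ≤ τ.card := by
      by_contra hcon
      push_neg at hcon
      have htop := hF τ hcon
      obtain ⟨g0, hg0⟩ := AddChar.ne_one_iff.1 hψne
      have hg0mem : g0 ∈ (Vminus a n τ).map F := by rw [htop]; trivial
      obtain ⟨v, hv, hvF⟩ := hg0mem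
      apply hg0
      rw [← hvF, charSum]
      refine Finset.prod_eq_one fun i _ => ?_
      by_cases hi : pr i
      · have hv0 : v i = 0 := hv i (Finset.mem_filter.2 ⟨Finset.mem_univ _, hi⟩)
        rw [hv0, map_zero, AddChar.map_zero_eq_one]
      · have h1 : ψ.compAddMonoidHom (h i) = 1 := not_not.1 hi
        have := DFunLike.congr_fun h1 (v i)
        simpa using this
    -- norm bounds on the factors
    have hle1 : ∀ i, ‖S ψ i‖ ≤ 1 := by
      intro i
      rw [hSdef]
      calc ‖∑ t, (q i t : ℂ) * ψ (h i t)‖ ≤ ∑ t, ‖(q i t : ℂ) * ψ (h i t)‖ :=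
        norm_sum_le _ _
      _ = ∑ t, q i t := by
          refine Finset.sum_congr rfl fun t _ => ?_
          rw [norm_mul, AddChar.norm_apply, mul_one, Complex.norm_real,
            Real.norm_of_nonneg (hq0 i t)]
      _ = 1 := hq1 i
    have hleeta : ∀ i, pr i → ‖S ψ i‖ ≤ eta a ε := by
      intro i hi
      have := norm_char_sum_le ha hε (q i) (hq0 i) (hq1 i) (hbal i)
        (ψ.compAddMonoidHom (h i)) hi
      calc ‖S ψ i‖ ≤ Real.sqrt (1 - gap a * ε) := this
      _ ≤ eta a ε := le_max_left _ _
    -- assemble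
    have hprod : ‖∏ i, S ψ i‖ ≤ eta a ε ^ τ.card := by
      rw [norm_prod]
      calc ∏ i, ‖S ψ i‖ ≤ ∏ i, (if pr i then eta a ε else 1) := by
            refine Finset.prod_le_prod (fun i _ => norm_nonneg _) fun i _ => ?_
            by_cases hi : pr i
            · rw [if_pos hi]; exact hleeta i hi
            · rw [if_neg hi]; exact hle1 i
      _ = ∏ _i ∈ τ, eta a ε := (Finset.prod_filter _ _).symm
      _ = eta a ε ^ τ.card := Finset.prod_const _
    have hpow : eta a ε ^ τ.card ≤ Real.exp (-(lam a ε * δ) * n) := by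
      have hetapos : (0:ℝ) < eta a ε := eta_pos
      have hlog : Real.log (eta a ε) < 0 :=
        Real.log_neg hetapos (eta_lt_one ha hε)
      have h1 : eta a ε ^ τ.card = Real.exp ((τ.card : ℝ) * Real.log (eta a ε)) := by
        rw [← Real.log_pow, Real.exp_log (pow_pos hetapos _)]
      rw [h1]
      apply Real.exp_le_exp.2
      have : -(lam a ε * δ) * n = (δ * n) * Real.log (eta a ε) := by
        simp only [lam]; ring
      rw [this]
      exact mul_le_mul_of_nonpos_right hτcard hlog.le
    exact hprod.trans hpow
  -- put the bounds together
  set e0 := Real.exp (-(lam a ε * δ) * n) with he0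
  have hnorm : |(N : ℝ) * P - 1| ≤ ((N : ℝ) - 1) * e0 := by
    have hcast : (((N : ℝ) * P - 1 : ℝ) : ℂ) = (N : ℂ) * (P : ℂ) - 1 := by push_cast; ring
    have habs : |(N : ℝ) * P - 1| = ‖(N : ℂ) * (P : ℂ) - 1‖ := by
      rw [← hcast, Complex.norm_real, Real.norm_eq_abs]
    rw [habs, hsplit]
    have hcard : (Finset.univ.erase (1 : AddChar G ℂ)).card = N - 1 := by
      rw [Finset.card_erase_of_mem (Finset.mem_univ _), Finset.card_univ, AddChar.card_eq]
    calc ‖∑ ψ ∈ Finset.univ.erase (1 : AddChar G ℂ), ∏ i, S ψ i‖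
        ≤ ∑ ψ ∈ Finset.univ.erase (1 : AddChar G ℂ), ‖∏ i, S ψ i‖ := norm_sum_le _ _
      _ ≤ ∑ _ψ ∈ Finset.univ.erase (1 : AddChar G ℂ), e0 := Finset.sum_le_sum hbound
      _ = ((N : ℝ) - 1) * e0 := by
          rw [Finset.sum_const, hcard, nsmul_eq_mul, Nat.cast_sub hNpos, Nat.cast_one]
  have he0pos : 0 < e0 := Real.exp_pos _
  have hNR : (0 : ℝ) < N := by exact_mod_cast hNpos
  have heq : P - (N : ℝ)⁻¹ = ((N : ℝ) * P - 1) / N := by field_simp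
  rw [heq, abs_div, abs_of_pos hNR, div_le_iff₀ hNR]
  nlinarith [hnorm, he0pos, hNR]


lemma abs_prod_sub_prod_le {ι : Type*} [DecidableEq ι] (s : Finset ι) (f g : ι → ℝ) (M d : ℝ)
    (hM : 0 ≤ M) (hd : 0 ≤ d)
    (hf0 : ∀ i ∈ s, 0 ≤ f i) (hfM : ∀ i ∈ s, f i ≤ M)
    (hg0 : ∀ i ∈ s, 0 ≤ g i) (hgM : ∀ i ∈ s, g i ≤ M)
    (hfg : ∀ i ∈ s, |f i - g i| ≤ d) :
    |∏ i ∈ s, f i - ∏ i ∈ s, g i| ≤ s.card * d * M ^ (s.card - 1) := by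
  induction s using Finset.induction_on with
  | empty => simp
  | @insert j s hj ih =>
    have hf0' : ∀ i ∈ s, 0 ≤ f i := fun i hi => hf0 i (Finset.mem_insert_of_mem hi)
    have hfM' : ∀ i ∈ s, f i ≤ M := fun i hi => hfM i (Finset.mem_insert_of_mem hi)
    have hg0' : ∀ i ∈ s, 0 ≤ g i := fun i hi => hg0 i (Finset.mem_insert_of_mem hi)
    have hgM' : ∀ i ∈ s, g i ≤ M := fun i hi => hgM i (Finset.mem_insert_of_mem hi)
    have hfg' : ∀ i ∈ s, |f i - g i| ≤ d := fun i hi => hfg i (Finset.mem_insert_of_mem hi)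
    have IH := ih hf0' hfM' hg0' hgM' hfg'
    rw [Finset.prod_insert hj, Finset.prod_insert hj, Finset.card_insert_of_notMem hj]
    have hjmem : j ∈ insert j s := Finset.mem_insert_self j s
    have key : f j * ∏ i ∈ s, f i - g j * ∏ i ∈ s, g i
        = (f j - g j) * ∏ i ∈ s, f i + g j * (∏ i ∈ s, f i - ∏ i ∈ s, g i) := by ring
    have hprodf0 : 0 ≤ ∏ i ∈ s, f i := Finset.prod_nonneg hf0'
    have hprodfM : ∏ i ∈ s, f i ≤ M ^ s.card := by
      calc ∏ i ∈ s, f i ≤ ∏ _i ∈ s, M := Finset.prod_le_prod hf0' hfM'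
      _ = M ^ s.card := Finset.prod_const _
    have h1 : |(f j - g j) * ∏ i ∈ s, f i| ≤ d * M ^ s.card := by
      rw [abs_mul, abs_of_nonneg hprodf0]
      exact mul_le_mul (hfg j hjmem) hprodfM hprodf0 hd
    have h2 : |g j * (∏ i ∈ s, f i - ∏ i ∈ s, g i)| ≤ M * (s.card * d * M ^ (s.card - 1)) := by
      rw [abs_mul, abs_of_nonneg (hg0 j hjmem)]
      exact mul_le_mul (hgM j hjmem) IH (abs_nonneg _)
        (le_trans (hg0 j hjmem) (hgM j hjmem))
    calc |f j * ∏ i ∈ s, f i - g j * ∏ i ∈ s, g i|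
        ≤ |(f j - g j) * ∏ i ∈ s, f i| + |g j * (∏ i ∈ s, f i - ∏ i ∈ s, g i)| := by
          rw [key]; exact abs_add_le _ _
      _ ≤ d * M ^ s.card + M * (s.card * d * M ^ (s.card - 1)) := add_le_add h1 h2
      _ ≤ ((s.card : ℝ) + 1) * d * M ^ ((s.card + 1) - 1) := by
          rcases Nat.eq_zero_or_pos s.card with hc | hc
          · simp [hc]
          · have hMM : M * M ^ (s.card - 1) = M ^ s.card := by
              rw [← pow_succ']
              congr 1
              omega
            have : M * ((s.card : ℝ) * d * M ^ (s.card - 1))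
                = (s.card : ℝ) * d * M ^ s.card := by
              rw [← hMM]; ring
            rw [this]
            simp only [Nat.add_sub_cancel]
            have h3 : 0 ≤ d * M ^ s.card := by positivity
            push_cast
            nlinarith [h3]
      _ = ((s.card + 1 : ℕ) : ℝ) * d * M ^ ((s.card + 1) - 1) := by push_cast; ring


lemma final_numeric {N n : ℕ} (hN : 1 ≤ N) {β : ℝ} (hβ : 0 < β) :
    (n : ℝ) * Real.exp (-β * n) * (((N : ℝ))⁻¹ + Real.exp (-β * n)) ^ (n - 1)
      ≤ ((N : ℝ) * (2 / β) * Real.exp ((N : ℝ) / β)) * Real.exp (-(β / 2) * n)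
        * (((N : ℝ)) ^ n)⁻¹ := by
  have hNR : (1 : ℝ) ≤ (N : ℝ) := by exact_mod_cast hN
  have hNR0 : (0 : ℝ) < (N : ℝ) := by linarith
  rcases Nat.eq_zero_or_pos n with hn | hn
  · subst hn
    simp only [Nat.cast_zero, zero_mul]
    positivity
  · obtain ⟨k, rfl⟩ : ∃ k, n = k + 1 := ⟨n - 1, (Nat.succ_pred_eq_of_pos hn).symm⟩
    simp only [Nat.add_sub_cancel]
    set nr : ℝ := ((k + 1 : ℕ) : ℝ) with hnr
    have hnr0 : (0 : ℝ) < nr := by rw [hnr]; exact_mod_cast Nat.succ_pos k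
    set x := Real.exp (-β * nr) with hxdef
    set y := Real.exp (-(β / 2) * nr) with hydef
    have hx0 : 0 < x := Real.exp_pos _
    have hy0 : 0 < y := Real.exp_pos _
    have hxy : x = y * y := by
      rw [hxdef, hydef, ← Real.exp_add]
      congr 1
      ring
    have hxE : x * Real.exp (β * nr) = 1 := by
      rw [hxdef, ← Real.exp_add]
      have h : -β * nr + β * nr = 0 := by ring
      rw [h, Real.exp_zero]
    have hyE : y * Real.exp (β / 2 * nr) = 1 := by
      rw [hydef, ← Real.exp_add]
      have h : -(β / 2) * nr + β / 2 * nr = 0 := by ring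
      rw [h, Real.exp_zero]
    have hβn : β * nr ≤ Real.exp (β * nr) := by
      linarith [Real.add_one_le_exp (β * nr)]
    have hβn2 : β / 2 * nr ≤ Real.exp (β / 2 * nr) := by
      linarith [Real.add_one_le_exp (β / 2 * nr)]
    have h2 : nr * x ≤ 1 / β := by
      rw [le_div_iff₀ hβ]
      nlinarith [mul_nonneg (sub_nonneg.2 hβn) hx0.le]
    have h4 : nr * y ≤ 2 / β := by
      rw [le_div_iff₀ hβ]
      nlinarith [mul_nonneg (sub_nonneg.2 hβn2) hy0.le]
    have hA : nr * x ≤ 2 / β * y := by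
      have h5 : nr * x = (nr * y) * y := by rw [hxy]; ring
      rw [h5]
      exact mul_le_mul_of_nonneg_right h4 hy0.le
    have h1 : (1 + (N : ℝ) * x) ^ k ≤ Real.exp ((N : ℝ) / β) := by
      calc (1 + (N : ℝ) * x) ^ k ≤ Real.exp ((N : ℝ) * x) ^ k := by
            apply pow_le_pow_left₀ (by positivity)
            linarith [Real.add_one_le_exp ((N : ℝ) * x)]
      _ = Real.exp ((k : ℝ) * ((N : ℝ) * x)) := by rw [← Real.exp_nat_mul]
      _ ≤ Real.exp ((N : ℝ) / β) := by
          apply Real.exp_le_exp.2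
          have hkn : (k : ℝ) ≤ nr := by rw [hnr]; push_cast; linarith
          calc (k : ℝ) * ((N : ℝ) * x) ≤ nr * ((N : ℝ) * x) :=
              mul_le_mul_of_nonneg_right hkn (by positivity)
            _ = (N : ℝ) * (nr * x) := by ring
            _ ≤ (N : ℝ) * (1 / β) := mul_le_mul_of_nonneg_left h2 (by positivity)
            _ = (N : ℝ) / β := by ring
    have hMsplit : (((N : ℝ))⁻¹ + x) ^ k = (((N : ℝ))⁻¹) ^ k * (1 + (N : ℝ) * x) ^ k := by
      rw [← mul_pow]
      congr 1
      field_simp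
    have hNk : (((N : ℝ))⁻¹) ^ k = (N : ℝ) * (((N : ℝ)) ^ (k + 1))⁻¹ := by
      rw [inv_pow, pow_succ]
      rw [mul_inv]
      field_simp
    calc nr * x * (((N : ℝ))⁻¹ + x) ^ k
        = (nr * x) * ((((N : ℝ))⁻¹) ^ k * (1 + (N : ℝ) * x) ^ k) := by rw [hMsplit]
      _ ≤ (2 / β * y) * ((((N : ℝ))⁻¹) ^ k * Real.exp ((N : ℝ) / β)) := by
          apply mul_le_mul hA
          · exact mul_le_mul_of_nonneg_left h1 (by positivity)
          · positivity
          · positivity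
      _ = ((N : ℝ) * (2 / β) * Real.exp ((N : ℝ) / β)) * y * (((N : ℝ)) ^ (k + 1))⁻¹ := by
          rw [hNk]
          ring

end ProofAux

open ProofAux

/-- For an `ε`-balanced random matrix `M` over `R = ℤ/aℤ` and a code `F ∈ Hom(V, G)` of
distance `δn`, the probability that `F ∘ M = 0` is within `K e^{-cn} |G|^{-n}` of
`|G|^{-n}`, where `K, c > 0` depend only on `G`, `ε`, `δ` and `a`. -/
theorem prob_FM_eq_zero_of_code (ε δ : ℝ) (hε : 0 < ε) (hδ : 0 < δ)
    (a : ℕ) (ha : 0 < a)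
    (G : Type*) [AddCommGroup G] [Finite G] (hGa : ∀ g : G, a • g = 0) :
    ∃ K c : ℝ, 0 < K ∧ 0 < c ∧
      ∀ (n : ℕ) (Ω : Type) [MeasurableSpace Ω] (μ : Measure Ω)
        (M : Ω → Matrix (Fin n) (Fin n) (ZMod a)), IsEpsBalancedMatrix μ ε M →
        ∀ F : (Fin n → ZMod a) →+ G, IsCode (δ * n) F →
          |(μ {ω | ∀ v, F ((M ω).mulVec v) = 0}).toReal - ((Nat.card G : ℝ) ^ n)⁻¹| ≤
            K * Real.exp (-c * n) * ((Nat.card G : ℝ) ^ n)⁻¹ := by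
  classical
  cases nonempty_fintype G
  haveI : NeZero a := ⟨ha.ne'⟩
  set N := Nat.card G with hNdef
  have hNfin : N = Fintype.card G := Nat.card_eq_fintype_card
  have hN1 : 1 ≤ N := Nat.one_le_iff_ne_zero.2 (by rw [hNfin]; exact Fintype.card_ne_zero)
  set ε' : ℝ := min ε (1/2) with hε'def
  have hε' : 0 < ε' := lt_min hε (by norm_num)
  have hε'le : ε' ≤ ε := min_le_left _ _
  have hε'half : ε' ≤ 1/2 := min_le_right _ _
  set β : ℝ := lam a ε' * δ with hβdef
  have hβ : 0 < β := mul_pos (lam_pos ha hε') hδ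
  refine ⟨(N : ℝ) * (2 / β) * Real.exp ((N : ℝ) / β), β / 2, by positivity, by positivity,
    ?_⟩
  intro n Ω _ μ M hM F hF
  obtain ⟨hprob, hmeas, hbalM, hind⟩ := hM
  haveI := hprob
  -- the entry distributions
  set q : Fin n → Fin n → ZMod a → ℝ :=
    fun i j t => (μ ((fun ω => M ω i j) ⁻¹' {t})).toReal with hq
  have hq0 : ∀ i j t, 0 ≤ q i j t := fun i j t => ENNReal.toReal_nonneg
  have hmsZ : ∀ (s : Set (ZMod a)), MeasurableSet s :=
    fun _ => MeasurableSpace.measurableSet_top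
  have hq1 : ∀ i j, ∑ t, q i j t = 1 := by
    intro i j
    have hdisj : Pairwise (Function.onFun Disjoint
        (fun t : ZMod a => (fun ω => M ω i j) ⁻¹' {t})) := by
      intro t t' htt'
      exact Set.disjoint_left.2 fun ω h1 h2 => htt' (h1.symm.trans h2)
    have hsum : ∑ t : ZMod a, μ ((fun ω => M ω i j) ⁻¹' {t}) = 1 := by
      rw [← tsum_fintype (L := SummationFilter.unconditional _), ← measure_iUnion hdisj (fun t => hmeas i j (hmsZ _))]
      have : ⋃ t : ZMod a, (fun ω => M ω i j) ⁻¹' {t} = Set.univ := by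
        ext ω; simp
      rw [this, measure_univ]
    rw [hq]
    rw [← ENNReal.toReal_sum (fun t _ => measure_ne_top μ _), hsum, ENNReal.toReal_one]
  have hqbal : ∀ i j (p : ℕ) (pp : p.Prime) (hpa : p ∣ a) (r : ZMod p),
      ∑ t ∈ Finset.univ.filter (fun t => ZMod.castHom hpa (ZMod p) t = r), q i j t
        ≤ 1 - ε' := by
    intro i j p pp hpa r
    have hseteq : {ω | ZMod.castHom hpa (ZMod p) (M ω i j) = r}
        = ⋃ t ∈ Finset.univ.filter (fun t : ZMod a => ZMod.castHom hpa (ZMod p) t = r),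
            (fun ω => M ω i j) ⁻¹' {t} := by
      ext ω
      simp only [Set.mem_setOf_eq, Set.mem_iUnion, Set.mem_preimage, Set.mem_singleton_iff,
        Finset.mem_filter, Finset.mem_univ, true_and]
      constructor
      · intro hc; exact ⟨M ω i j, hc, rfl⟩
      · rintro ⟨t, hc, ht⟩; rw [ht]; exact hc
    have hdisj : (Finset.univ.filter
          (fun t : ZMod a => ZMod.castHom hpa (ZMod p) t = r) : Set (ZMod a)).Pairwise
        (Function.onFun Disjoint (fun t : ZMod a => (fun ω => M ω i j) ⁻¹' {t})) := by
      intro t _ t' _ htt'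
      exact Set.disjoint_left.2 fun ω h1 h2 => htt' (h1.symm.trans h2)
    have hμeq : μ {ω | ZMod.castHom hpa (ZMod p) (M ω i j) = r}
        = ∑ t ∈ Finset.univ.filter (fun t : ZMod a => ZMod.castHom hpa (ZMod p) t = r),
            μ ((fun ω => M ω i j) ⁻¹' {t}) := by
      rw [hseteq, measure_biUnion_finset hdisj (fun t _ => hmeas i j (hmsZ _))]
    have hle := hbalM i j p pp hpa r
    have h1 : ∑ t ∈ Finset.univ.filter
          (fun t : ZMod a => ZMod.castHom hpa (ZMod p) t = r), q i j t
        = (μ {ω | ZMod.castHom hpa (ZMod p) (M ω i j) = r}).toReal := by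
      rw [hμeq, ENNReal.toReal_sum (fun t _ => measure_ne_top μ _)]
    rw [h1]
    have h2 : (μ {ω | ZMod.castHom hpa (ZMod p) (M ω i j) = r}).toReal
        ≤ (ENNReal.ofReal (1 - ε)).toReal :=
      ENNReal.toReal_mono ENNReal.ofReal_ne_top hle
    refine h2.trans ?_
    rcases le_total (1 - ε) 0 with h3 | h3
    · rw [ENNReal.ofReal_eq_zero.2 h3]
      simp only [ENNReal.toReal_zero]
      linarith
    · rw [ENNReal.toReal_ofReal h3]
      linarith
  -- joint distribution of the matrix
  have hsetinter : ∀ A : Matrix (Fin n) (Fin n) (ZMod a),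
      {ω | M ω = A} = ⋂ p ∈ (Finset.univ : Finset (Fin n × Fin n)),
        (fun ω => M ω p.1 p.2) ⁻¹' {A p.1 p.2} := by
    intro A
    ext ω
    simp only [Set.mem_setOf_eq, Set.mem_iInter, Set.mem_preimage, Set.mem_singleton_iff,
      Finset.mem_univ, forall_const]
    constructor
    · intro hMA p; rw [hMA]
    · intro hall; ext i j; exact hall (i, j)
  have hjoint : ∀ A : Matrix (Fin n) (Fin n) (ZMod a),
      μ {ω | M ω = A} = ∏ p : Fin n × Fin n, μ ((fun ω => M ω p.1 p.2) ⁻¹' {A p.1 p.2}) := by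
    intro A
    have := hind.measure_inter_preimage_eq_mul (S := Finset.univ)
      (sets := fun p => ({A p.1 p.2} : Set (ZMod a))) (fun p _ => hmsZ _)
    rw [hsetinter A]
    exact this
  have hmeasA : ∀ A : Matrix (Fin n) (Fin n) (ZMod a), MeasurableSet {ω | M ω = A} := by
    intro A
    rw [hsetinter A]
    exact Finset.measurableSet_biInter _ (fun p _ => hmeas p.1 p.2 (hmsZ _))
  -- decompose the event over matrices
  set SS := Finset.univ.filter
    (fun A : Matrix (Fin n) (Fin n) (ZMod a) => ∀ v, F (A.mulVec v) = 0) with hSS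
  have hEdecomp : {ω | ∀ v, F ((M ω).mulVec v) = 0} = ⋃ A ∈ SS, {ω | M ω = A} := by
    ext ω
    simp only [Set.mem_setOf_eq, Set.mem_iUnion, hSS, Finset.mem_filter, Finset.mem_univ,
      true_and]
    constructor
    · intro hω; exact ⟨M ω, hω, rfl⟩
    · rintro ⟨A, hA, hMA⟩; intro v; rw [hMA]; exact hA v
  have hμsum : μ {ω | ∀ v, F ((M ω).mulVec v) = 0} = ∑ A ∈ SS, μ {ω | M ω = A} := by
    rw [hEdecomp]
    refine measure_biUnion_finset ?_ (fun A _ => hmeasA A)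
    intro A _ B _ hAB
    exact Set.disjoint_left.2 fun ω h1 h2 => hAB (h1.symm.trans h2)
  have hPreal : (μ {ω | ∀ v, F ((M ω).mulVec v) = 0}).toReal
      = ∑ A ∈ SS, ∏ p : Fin n × Fin n, q p.1 p.2 (A p.1 p.2) := by
    rw [hμsum, ENNReal.toReal_sum (fun A _ => measure_ne_top μ _)]
    refine Finset.sum_congr rfl fun A _ => ?_
    rw [hjoint A, ENNReal.toReal_prod]
  -- columns
  have hcoliff : ∀ A : Matrix (Fin n) (Fin n) (ZMod a),
      (∀ v, F (A.mulVec v) = 0) ↔ ∀ j, F (fun i => A i j) = 0 := by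
    intro A
    constructor
    · intro hall j
      have := hall (Pi.single j 1)
      rw [Matrix.mulVec_single_one] at this
      exact this
    · intro hcols v
      have hAv : A.mulVec v = ∑ j, v j • (fun i => A i j) := by
        ext i
        simp only [Matrix.mulVec, dotProduct, Finset.sum_apply, Pi.smul_apply, smul_eq_mul]
        exact Finset.sum_congr rfl fun j _ => mul_comm _ _
      rw [hAv, map_sum]
      refine Finset.sum_eq_zero fun j _ => ?_
      have h1 : v j • (fun i => A i j) = (v j).val • (fun i => A i j) := by
        rw [← Nat.cast_smul_eq_nsmul (ZMod a)]
        congr 1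
        rw [ZMod.natCast_val, ZMod.cast_id]
      rw [h1, AddMonoidHom.map_nsmul, hcols j, smul_zero]
  set T := Finset.univ.filter (fun x : Fin n → ZMod a => F x = 0) with hT
  set Pcol : Fin n → ℝ := fun j => ∑ x ∈ T, ∏ i, q i j (x i) with hPcol
  have hfact : ∑ A ∈ SS, ∏ p : Fin n × Fin n, q p.1 p.2 (A p.1 p.2) = ∏ j, Pcol j := by
    rw [hPcol]
    rw [Finset.prod_univ_sum (fun _ : Fin n => T) (fun j x => ∏ i, q i j (x i))]
    refine Finset.sum_nbij' (fun A => fun j i => A i j) (fun g => Matrix.of fun i j => g j i)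
      ?_ ?_ ?_ ?_ ?_
    · intro A hA
      rw [Fintype.mem_piFinset]
      intro j
      rw [hT, Finset.mem_filter]
      exact ⟨Finset.mem_univ _, (hcoliff A).1 ((Finset.mem_filter.1 hA).2) j⟩
    · intro g hg
      rw [hSS, Finset.mem_filter]
      refine ⟨Finset.mem_univ _, (hcoliff _).2 fun j => ?_⟩
      have := Fintype.mem_piFinset.1 hg j
      rw [hT, Finset.mem_filter] at this
      exact this.2
    · intro A _; rfl
    · intro g _; rfl
    · intro A _
      rw [Fintype.prod_prod_type]
      exact Finset.prod_comm
  -- per-column bound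
  have hcolb : ∀ j, |Pcol j - ((N : ℝ))⁻¹| ≤ Real.exp (-β * n) := by
    intro j
    have h2 := col_bound (G := G) ha hε' hδ (fun i => q i j) (fun i t => hq0 i j t)
      (fun i => hq1 i j) (fun i p pp hpa r => hqbal i j p pp hpa r) F hF
    rw [hNfin, hPcol]
    have h3 : -β * (n : ℝ) = -(lam a ε' * δ) * n := by rw [hβdef]
    rw [h3]
    simpa using h2
  -- assemble everything
  set e0 := Real.exp (-β * n) with he0
  have he00 : 0 ≤ e0 := (Real.exp_pos _).le
  have hNR0 : (0 : ℝ) < (N : ℝ) := by exact_mod_cast hN1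
  set Mb : ℝ := ((N : ℝ))⁻¹ + e0 with hMb
  have hMb0 : 0 ≤ Mb := by positivity
  have hPcol0 : ∀ j, 0 ≤ Pcol j := by
    intro j
    rw [hPcol]
    exact Finset.sum_nonneg fun x _ => Finset.prod_nonneg fun i _ => hq0 i j (x i)
  have hPcolM : ∀ j, Pcol j ≤ Mb := by
    intro j
    have := (abs_le.1 (hcolb j)).2
    rw [hMb]
    linarith
  have hgMb : ((N : ℝ))⁻¹ ≤ Mb := by
    rw [hMb]
    linarith
  have habs := abs_prod_sub_prod_le Finset.univ Pcol (fun _ => ((N : ℝ))⁻¹) Mb e0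
    hMb0 he00 (fun j _ => hPcol0 j) (fun j _ => hPcolM j)
    (fun j _ => by positivity) (fun j _ => hgMb) (fun j _ => hcolb j)
  have hprodg : (∏ _j : Fin n, ((N : ℝ))⁻¹) = (((N : ℝ)) ^ n)⁻¹ := by
    rw [Finset.prod_const, Finset.card_univ, Fintype.card_fin, inv_pow]
  have hcard : (Finset.univ : Finset (Fin n)).card = n := by
    rw [Finset.card_univ, Fintype.card_fin]
  rw [hPreal, hfact]
  calc |∏ j, Pcol j - (((N : ℝ)) ^ n)⁻¹|
      = |∏ j, Pcol j - ∏ _j : Fin n, ((N : ℝ))⁻¹| := by rw [hprodg]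
    _ ≤ (Finset.univ : Finset (Fin n)).card * e0 * Mb ^ ((Finset.univ : Finset (Fin n)).card - 1) := habs
    _ = (n : ℝ) * Real.exp (-β * n) * (((N : ℝ))⁻¹ + Real.exp (-β * n)) ^ (n - 1) := by
        rw [hcard, he0, hMb]
    _ ≤ ((N : ℝ) * (2 / β) * Real.exp ((N : ℝ) / β)) * Real.exp (-(β / 2) * n)
        * (((N : ℝ)) ^ n)⁻¹ := final_numeric hN1 hβ


end
end

section
/- Let P be a finite set of primes and let G be a finite abelian group all of whose prime divisors lie in P. Write |G| = ∏_{p∈P} p^{k_p} and set a = ∏_{p∈P} p^{k_p + 1}. Then for every finite abelian group H, H_P ≅ G if and only if H ⊗ ℤ/aℤ ≅ G. -/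
open Pointwise

noncomputable section

/-- The `P`-part `H_P` of an abelian group `H`: the subgroup of elements killed by some
power of `∏_{p ∈ P} p`, i.e. the product of the `p`-primary components for `p ∈ P`. -/
def primesPart (P : Finset ℕ) (H : Type*) [AddCommGroup H] : AddSubgroup H where
  carrier := {x | ∃ k : ℕ, (∏ p ∈ P, p) ^ k • x = 0}
  zero_mem' := ⟨0, by simp⟩
  add_mem' := by
    rintro x y ⟨k, hk⟩ ⟨l, hl⟩
    refine ⟨k + l, ?_⟩
    have hx : (∏ p ∈ P, p) ^ (k + l) • x = 0 := by
      rw [add_comm, pow_add, mul_smul, hk, smul_zero]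
    have hy : (∏ p ∈ P, p) ^ (k + l) • y = 0 := by
      rw [pow_add, mul_smul, hl, smul_zero]
    rw [smul_add, hx, hy, add_zero]
  neg_mem' := by
    rintro x ⟨k, hk⟩
    exact ⟨k, by rw [smul_neg, hk, neg_zero]⟩

private lemma nsmul_eq_zero_of_dvd {A : Type*} [AddCommGroup A] {c e : ℕ} (h : c ∣ e)
    {x : A} (hx : c • x = 0) : e • x = 0 := by
  obtain ⟨f, rfl⟩ := h
  rw [mul_comm, mul_smul, hx, smul_zero]

private lemma smul_eq_zero_of_coprime {A : Type*} [AddCommGroup A] {c d : ℕ}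
    (h : Nat.Coprime c d) {x : A} (hc : c • x = 0) (hd : d • x = 0) : x = 0 := by
  have h1 : addOrderOf x ∣ Nat.gcd c d :=
    Nat.dvd_gcd (addOrderOf_dvd_of_nsmul_eq_zero hc) (addOrderOf_dvd_of_nsmul_eq_zero hd)
  rw [Nat.Coprime] at h
  rw [h, Nat.dvd_one] at h1
  have h2 := addOrderOf_nsmul_eq_zero x
  rwa [h1, one_nsmul] at h2

private lemma factorization_prod_pow_apply {P : Finset ℕ} (hP : ∀ p ∈ P, p.Prime)
    (c : ℕ → ℕ) {q : ℕ} (hq : q ∈ P) :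
    (∏ p ∈ P, p ^ c p).factorization q = c q := by
  rw [Nat.factorization_prod (fun p hp => pow_ne_zero _ (hP p hp).pos.ne')]
  rw [Finsupp.finset_sum_apply]
  rw [Finset.sum_eq_single q]
  · rw [(hP q hq).factorization_pow, Finsupp.single_eq_same]
  · intro p hp hne
    rw [(hP p hp).factorization_pow, Finsupp.single_eq_of_ne' hne]
  · intro h; exact absurd hq h

private lemma crux_prod_smul {A : Type*} [AddCommGroup A] [Finite A]
    (P : Finset ℕ) (hP : ∀ p ∈ P, p.Prime) (k : ℕ → ℕ) (B : AddSubgroup A)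
    (hB : ∀ y : A, y ∈ B ↔ (∏ p ∈ P, p ^ (k p + 1)) • y = 0)
    (hcard : Nat.card B = ∏ p ∈ P, p ^ k p)
    (htors : ∀ y : A, ∃ t : ℕ, (∏ p ∈ P, p) ^ t • y = 0)
    (x : A) : (∏ p ∈ P, p ^ (k p + 1)) • x = 0 := by
  set n := ∏ p ∈ P, p with hn
  set a := ∏ p ∈ P, p ^ (k p + 1) with ha
  set b := ∏ p ∈ P, p ^ (k p) with hb
  have ha0 : a ≠ 0 := Finset.prod_ne_zero_iff.mpr fun p hp => pow_ne_zero _ (hP p hp).pos.ne'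
  have hb0 : b ≠ 0 := Finset.prod_ne_zero_iff.mpr fun p hp => pow_ne_zero _ (hP p hp).pos.ne'
  by_contra hax
  set m := addOrderOf x with hm
  have hm0 : m ≠ 0 := by
    intro h
    have hd := addOrderOf_dvd_natCard x
    rw [← hm, h] at hd
    exact Nat.card_pos.ne' (Nat.eq_zero_of_zero_dvd hd)
  have hma : ¬ m ∣ a := fun h => hax (addOrderOf_dvd_iff_nsmul_eq_zero.mp h)
  obtain ⟨t, ht⟩ := htors x
  have hmn : m ∣ n ^ t := addOrderOf_dvd_of_nsmul_eq_zero ht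
  have hle : ¬ m.factorization ≤ a.factorization := fun h =>
    hma ((Nat.factorization_le_iff_dvd hm0 ha0).mp h)
  rw [Finsupp.le_def] at hle
  push_neg at hle
  obtain ⟨q, hq⟩ := hle
  have hqpos : 0 < m.factorization q := lt_of_le_of_lt (Nat.zero_le _) hq
  have hqm : q ∣ m := Nat.dvd_of_factorization_pos hqpos.ne'
  have hqprime : q.Prime := by
    have : q ∈ m.factorization.support := Finsupp.mem_support_iff.mpr hqpos.ne'
    rw [Nat.support_factorization] at this
    exact Nat.prime_of_mem_primeFactors this
  have hqP : q ∈ P := by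
    have hqn : q ∣ n := hqprime.dvd_of_dvd_pow (hqm.trans hmn)
    obtain ⟨p, hp, hqp⟩ := hqprime.prime.exists_mem_finset_dvd hqn
    rwa [← (Nat.prime_dvd_prime_iff_eq hqprime (hP p hp)).mp hqp] at hp
  have hfa : a.factorization q = k q + 1 := factorization_prod_pow_apply hP _ hqP
  have hfac : k q + 2 ≤ m.factorization q := by omega
  set d := q ^ (k q + 1) with hd
  have hdm : d ∣ m := (hqprime.pow_dvd_iff_le_factorization hm0).mpr (by omega)
  have hda : d ∣ a := by rw [ha]; exact Finset.dvd_prod_of_mem _ hqP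
  set y := (m / d) • x with hy
  have hyo : addOrderOf y = d := by
    rw [hy, hm]
    exact addOrderOf_nsmul_addOrderOf_sub hm0 (hm ▸ hdm)
  have hyB : y ∈ B := by
    rw [hB]
    obtain ⟨c, hc⟩ := hda
    rw [hy, smul_smul, hc]
    have : d * c * (m / d) = c * m := by
      rw [mul_comm d c, mul_assoc, Nat.mul_div_cancel' hdm]
    rw [this, mul_smul, addOrderOf_nsmul_eq_zero, smul_zero]
  have hdb : d ∣ b := by
    rw [← hyo, ← hcard]
    exact B.addOrderOf_dvd_natCard hyB
  have : k q + 1 ≤ b.factorization q := (hqprime.pow_dvd_iff_le_factorization hb0).mp hdb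
  rw [hb, factorization_prod_pow_apply hP _ hqP] at this
  omega

/-- Let `P` be a finite set of primes, `G` a finite abelian group all of whose prime
divisors lie in `P`, `|G| = ∏_{p ∈ P} p^{k_p}`, and `a = ∏_{p ∈ P} p^{k_p + 1}`. Then for
every finite abelian group `H`, `H_P ≅ G` if and only if `H ⊗ ℤ/aℤ ≅ G`. -/
theorem primesPart_iso_iff_tensor_iso
    (P : Finset ℕ) (hP : ∀ p ∈ P, p.Prime)
    (G : Type*) [AddCommGroup G] [Finite G]
    (hG : ∀ q : ℕ, q.Prime → q ∣ Nat.card G → q ∈ P)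
    (k : ℕ → ℕ) (hcard : Nat.card G = ∏ p ∈ P, p ^ k p)
    (H : Type*) [AddCommGroup H] [Finite H] :
    Nonempty ((primesPart P H) ≃+ G) ↔
      Nonempty ((TensorProduct ℤ H (ZMod (∏ p ∈ P, p ^ (k p + 1)))) ≃+ G) := by
  classical
  set n := ∏ p ∈ P, p with hn
  set a := ∏ p ∈ P, p ^ (k p + 1) with ha
  set b := ∏ p ∈ P, p ^ (k p) with hb
  have hP' : ∀ p ∈ P, p ≠ 0 := fun p hp => (hP p hp).pos.ne'
  have ha0 : a ≠ 0 := Finset.prod_ne_zero_iff.mpr fun p hp => pow_ne_zero _ (hP' p hp)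
  have hb0 : b ≠ 0 := Finset.prod_ne_zero_iff.mpr fun p hp => pow_ne_zero _ (hP' p hp)
  have hn0 : n ≠ 0 := Finset.prod_ne_zero_iff.mpr hP'
  have hba : b ∣ a := Finset.prod_dvd_prod_of_dvd _ _ fun p _ => pow_dvd_pow p (Nat.le_succ _)
  have hna : n ∣ a := Finset.prod_dvd_prod_of_dvd _ _ fun p _ => by
    simpa using pow_dvd_pow p (Nat.succ_le_succ (Nat.zero_le (k p)))
  have han : a ∣ n ^ (∑ p ∈ P, (k p + 1)) := by
    rw [← Finset.prod_pow_eq_pow_sum]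
    exact Finset.prod_dvd_prod_of_dvd _ _ fun p hp =>
      pow_dvd_pow_of_dvd (hn ▸ Finset.dvd_prod_of_mem _ hp) _
  -- basic data of H
  set N := Nat.card H with hN
  have hN0 : N ≠ 0 := Nat.card_pos.ne'
  have hNsmul : ∀ x : H, N • x = 0 := fun x =>
    addOrderOf_dvd_iff_nsmul_eq_zero.mp (addOrderOf_dvd_natCard x)
  set u := Nat.gcd N (a ^ N) with hu
  have huN : u ∣ N := Nat.gcd_dvd_left _ _
  have hu0 : u ≠ 0 := fun h => hN0 (Nat.eq_zero_of_zero_dvd (h ▸ huN))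
  set v := N / u with hv
  have huv : u * v = N := Nat.mul_div_cancel' huN
  have hv0 : v ≠ 0 := by
    intro h
    rw [h, mul_zero] at huv
    exact hN0 huv.symm
  -- coprimality facts
  have hfv : ∀ q : ℕ, q.Prime → q ∣ a → v.factorization q = 0 := by
    intro q hq hqa
    have h1 : v.factorization = N.factorization - u.factorization :=
      hv ▸ Nat.factorization_div huN
    have h2 : u.factorization q = min (N.factorization q) ((a ^ N).factorization q) := by
      rw [hu, Nat.factorization_gcd hN0 (pow_ne_zero _ ha0)]
      rfl
    have h3 : (a ^ N).factorization q = N * a.factorization q := by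
      rw [Nat.factorization_pow]; rfl
    have h4 : 1 ≤ a.factorization q := hq.factorization_pos_of_dvd ha0 hqa
    have h5 : N.factorization q ≤ N := (Nat.factorization_lt _ hN0).le
    have h6 : u.factorization q = N.factorization q := by
      rw [h2, h3]
      exact min_eq_left (h5.trans (Nat.le_mul_of_pos_right N h4))
    rw [h1]
    simp [h6]
  have hcop_av : Nat.Coprime a v := by
    rw [Nat.coprime_iff_gcd_eq_one]
    by_contra h
    obtain ⟨q, hq, hqd⟩ := Nat.exists_prime_and_dvd h
    have hqa : q ∣ a := hqd.trans (Nat.gcd_dvd_left _ _)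
    have hqv : q ∣ v := hqd.trans (Nat.gcd_dvd_right _ _)
    exact absurd (hfv q hq hqa) (hq.factorization_pos_of_dvd hv0 hqv).ne'
  have hcop_uv : Nat.Coprime u v := by
    rw [Nat.coprime_iff_gcd_eq_one]
    by_contra h
    obtain ⟨q, hq, hqd⟩ := Nat.exists_prime_and_dvd h
    have hqu : q ∣ u := hqd.trans (Nat.gcd_dvd_left _ _)
    have hqa : q ∣ a := hq.dvd_of_dvd_pow (hqu.trans (Nat.gcd_dvd_right N (a ^ N)))
    have hqv : q ∣ v := hqd.trans (Nat.gcd_dvd_right _ _)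
    exact absurd (hfv q hq hqa) (hq.factorization_pos_of_dvd hv0 hqv).ne'
  have hcop_nv : Nat.Coprime n v := Nat.Coprime.coprime_dvd_left hna hcop_av
  -- u-torsion elements lie in the primes part
  have hu_tors : ∀ z : H, u • z = 0 → z ∈ primesPart P H := by
    intro z hz
    have h1 : u ∣ n ^ (N * ∑ p ∈ P, (k p + 1)) := by
      calc u ∣ a ^ N := Nat.gcd_dvd_right _ _
        _ ∣ (n ^ (∑ p ∈ P, (k p + 1))) ^ N := pow_dvd_pow_of_dvd han N
        _ = n ^ (N * ∑ p ∈ P, (k p + 1)) := by rw [← pow_mul, mul_comm]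
    exact ⟨N * ∑ p ∈ P, (k p + 1), nsmul_eq_zero_of_dvd h1 hz⟩
  -- Bezout decomposition
  have hdec : ∀ (c : ℕ), Nat.Coprime c v → ∀ z : H, ∃ α β : ℤ,
      z = (α * (c : ℤ)) • z + (β * (v : ℤ)) • z ∧
        (β * (v : ℤ)) • z ∈ primesPart P H := by
    intro c hc z
    obtain ⟨α, β, hαβ⟩ := Nat.isCoprime_iff_coprime.mpr hc
    refine ⟨α, β, ?_, ?_⟩
    · rw [← add_zsmul, hαβ, one_zsmul]
    · apply hu_tors
      have h1 : (u : ℕ) • ((β * (v : ℤ)) • z) = ((u : ℤ) * (β * (v : ℤ))) • z := by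
        rw [← natCast_zsmul ((β * (v : ℤ)) • z) u, ← mul_zsmul]
      have h2 : (u : ℤ) * (β * (v : ℤ)) = β * ((N : ℕ) : ℤ) := by
        rw [← huv]; push_cast; ring
      rw [h1, h2, mul_zsmul, natCast_zsmul, hNsmul, smul_zero]
  -- the submodule a•H and quotient
  set S : Submodule ℤ H := (a : ℤ) • (⊤ : Submodule ℤ H) with hS
  have hSmem : ∀ x : H, x ∈ S ↔ ∃ y : H, (a : ℤ) • y = x := by
    intro x
    constructor
    · intro hx
      have hx' : x ∈ ((a : ℤ) • (⊤ : Submodule ℤ H) : Submodule ℤ H) := hx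
      rw [← SetLike.mem_coe, Submodule.coe_pointwise_smul] at hx'
      obtain ⟨y, -, rfl⟩ := Set.mem_smul_set.mp hx'
      exact ⟨y, rfl⟩
    · rintro ⟨y, rfl⟩
      exact Submodule.smul_mem_pointwise_smul y (a : ℤ) ⊤ trivial
  set A := primesPart P H with hA
  set f : A →+ (H ⧸ S) := (Submodule.mkQ S).toAddMonoidHom.comp (AddSubgroup.subtype A) with hf
  have hfapp : ∀ x : A, f x = Submodule.Quotient.mk (x : H) := fun x => rfl
  have hf_surj : Function.Surjective f := by
    intro z
    obtain ⟨x, rfl⟩ := Submodule.Quotient.mk_surjective S z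
    obtain ⟨α, β, hzeq, hmem⟩ := hdec a hcop_av x
    refine ⟨⟨(β * (v : ℤ)) • x, hmem⟩, ?_⟩
    rw [hfapp, Submodule.Quotient.eq]
    have h1 : (β * (v : ℤ)) • x - x = -((α * (a : ℤ)) • x) := by
      nth_rewrite 2 [hzeq]
      abel
    rw [h1]
    refine neg_mem ?_
    rw [hSmem]
    exact ⟨α • x, by rw [smul_comm, ← mul_zsmul, mul_comm]⟩
  -- the multiplication-by-a map on A
  set φ : A →+ A := AddMonoidHom.mk' (fun y : A => (a : ℤ) • y) (fun x y => smul_add _ x y)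
    with hφ
  have hφapp : ∀ y : A, φ y = (a : ℤ) • y := fun y => rfl
  have hker : f.ker = φ.range := by
    ext x
    simp only [AddMonoidHom.mem_ker, AddMonoidHom.mem_range]
    constructor
    · intro hx
      have hxS : (x : H) ∈ S := by
        rw [hfapp, Submodule.Quotient.mk_eq_zero] at hx
        exact hx
      obtain ⟨z, hz⟩ := (hSmem _).mp hxS
      obtain ⟨α, β, hzeq, hmem⟩ := hdec u hcop_uv z
      set y : H := (β * (v : ℤ)) • z with hy
      have hzy : z - y = (α * (u : ℤ)) • z := by
        nth_rewrite 1 [hzeq]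
        abel
      have hwval : (x : H) - (a : ℤ) • y = (a : ℤ) • ((α * (u : ℤ)) • z) := by
        rw [← hz, ← smul_sub, hzy]
      have hwA : (x : H) - (a : ℤ) • y ∈ primesPart P H :=
        sub_mem x.2 (AddSubgroup.zsmul_mem _ hmem _)
      have hvw : (v : ℕ) • ((x : H) - (a : ℤ) • y) = 0 := by
        rw [hwval, ← natCast_zsmul ((a : ℤ) • (α * (u : ℤ)) • z) v, ← mul_zsmul, ← mul_zsmul]
        have h2 : (v : ℤ) * (a : ℤ) * (α * (u : ℤ)) = ((a : ℤ) * α) * ((N : ℕ) : ℤ) := by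
          rw [← huv]; push_cast; ring
        rw [h2, mul_zsmul, natCast_zsmul, hNsmul, smul_zero]
      obtain ⟨t, htw⟩ := hwA
      have hw0 : (x : H) - (a : ℤ) • y = 0 :=
        smul_eq_zero_of_coprime (Nat.Coprime.pow_left t hcop_nv) htw hvw
      refine ⟨⟨y, hmem⟩, ?_⟩
      apply Subtype.ext
      have : ((φ ⟨y, hmem⟩ : A) : H) = (a : ℤ) • y := rfl
      rw [this]
      rw [sub_eq_zero] at hw0
      exact hw0.symm
    · rintro ⟨y, rfl⟩
      rw [hfapp]
      have : ((φ y : A) : H) = (a : ℤ) • (y : H) := rfl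
      rw [this, Submodule.Quotient.mk_eq_zero]
      exact (hSmem _).mpr ⟨(y : H), rfl⟩
  have e5 : (A ⧸ φ.range) ≃+ (H ⧸ S) :=
    (QuotientAddGroup.quotientAddEquivOfEq hker.symm).trans
      (QuotientAddGroup.quotientKerEquivOfSurjective f hf_surj)
  -- the tensor chain
  set I : Ideal ℤ := Ideal.span {(a : ℤ)} with hI
  have e1 : ZMod a ≃ₗ[ℤ] (ℤ ⧸ I) :=
    ((Int.quotientSpanNatEquivZMod a).symm.toAddEquiv).toIntLinearEquiv
  have e2 : TensorProduct ℤ H (ZMod a) ≃ₗ[ℤ] TensorProduct ℤ H (ℤ ⧸ I) :=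
    TensorProduct.congr (LinearEquiv.refl ℤ H) e1
  have e3 : TensorProduct ℤ H (ℤ ⧸ I) ≃ₗ[ℤ] (H ⧸ (I • ⊤ : Submodule ℤ H)) :=
    TensorProduct.tensorQuotEquivQuotSMul H I
  have e4 : (H ⧸ (I • ⊤ : Submodule ℤ H)) ≃ₗ[ℤ] (H ⧸ S) :=
    Submodule.quotEquivOfEq _ _ (Submodule.ideal_span_singleton_smul _ _)
  have master : TensorProduct ℤ H (ZMod a) ≃+ (A ⧸ φ.range) :=
    (e2.trans (e3.trans e4)).toAddEquiv.trans e5.symm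
  -- triviality of φ.range from a-torsion
  have hbot : (∀ x : A, a • x = 0) → φ.range = ⊥ := by
    intro hkill
    rw [AddSubgroup.eq_bot_iff_forall]
    rintro x ⟨y, rfl⟩
    rw [hφapp, natCast_zsmul]
    exact hkill y
  have hquotbot : φ.range = ⊥ → Nonempty (A ≃+ (A ⧸ φ.range)) := by
    intro hK
    exact ⟨(QuotientAddGroup.quotientBot (G := A)).symm.trans
      (QuotientAddGroup.quotientAddEquivOfEq hK.symm)⟩
  constructor
  · rintro ⟨e⟩
    have hkill : ∀ x : A, a • x = 0 := by
      intro x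
      have h1 : addOrderOf x ∣ Nat.card A := addOrderOf_dvd_natCard x
      have h2 : Nat.card A = b := by
        rw [Nat.card_congr e.toEquiv, hcard]
      exact addOrderOf_dvd_iff_nsmul_eq_zero.mp (h1.trans (h2 ▸ hba))
    obtain ⟨eq⟩ := hquotbot (hbot hkill)
    exact ⟨master.trans (eq.symm.trans e)⟩
  · rintro ⟨e⟩
    have e' : (A ⧸ φ.range) ≃+ G := master.symm.trans e
    -- counting
    have hc1 : Nat.card A = Nat.card (A ⧸ φ.range) * Nat.card φ.range :=
      AddSubgroup.card_eq_card_quotient_mul_card_addSubgroup _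
    have hc2 : Nat.card A = Nat.card (A ⧸ φ.ker) * Nat.card φ.ker :=
      AddSubgroup.card_eq_card_quotient_mul_card_addSubgroup _
    have hc3 : Nat.card (A ⧸ φ.ker) = Nat.card φ.range :=
      Nat.card_congr (QuotientAddGroup.quotientKerEquivRange φ).toEquiv
    have hc4 : Nat.card (A ⧸ φ.range) = b := by
      rw [Nat.card_congr e'.toEquiv]; exact hcard.symm ▸ rfl
    have hc5 : Nat.card φ.range ≠ 0 := Nat.card_pos.ne'
    have hcker : Nat.card φ.ker = b := by
      have h := hc2.symm.trans hc1
      rw [hc3, hc4, mul_comm b] at h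
      exact Nat.eq_of_mul_eq_mul_left (Nat.pos_of_ne_zero hc5) h
    -- apply the crux lemma
    have hkill : ∀ x : A, a • x = 0 := by
      have hBmem : ∀ y : A, y ∈ φ.ker ↔ a • y = 0 := by
        intro y
        rw [AddMonoidHom.mem_ker, hφapp, natCast_zsmul]
      have htorsA : ∀ y : A, ∃ t : ℕ, n ^ t • y = 0 := by
        intro y
        obtain ⟨t, ht⟩ := y.2
        refine ⟨t, ?_⟩
        apply Subtype.ext
        have : ((n ^ t • y : A) : H) = n ^ t • (y : H) := rfl
        rw [this, ht]
        rfl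
      exact crux_prod_smul P hP k φ.ker hBmem hcker htorsA
    obtain ⟨eq⟩ := hquotbot (hbot hkill)
    exact ⟨eq.trans e'⟩

end
end
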